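/- Totality of the qubit subalgebra and its commutant: if a bounded operator T on H commutes with each of a₁, a₂, a₃, with U₁(θ) for every θ ∈ ℝ, and with V², then there exists c ∈ ℂ with T = c • (identity on H). -/

import Mathlib

open Complex

noncomputable section

/-- The Hilbert space `H := ℓ²(ℤ, ℂ)`. -/
abbrev H : Type := lp (fun _ : ℤ => ℂ) 2

/-- The orthonormal basis vectors `e ℓ = lp.single 2 ℓ 1`. -/
def e (ℓ : ℤ) : H := lp.single 2 ℓ 1
/-- `a₃ := U(π)`. -/
def a₃ (U : ℝ → (H →L[ℂ] H)) : H →L[ℂ] H := U Real.pi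

/-- `a₊ := (1/2) • ((1 − U(π)) ∘ V*)`. -/
def aPlus (U : ℝ → (H →L[ℂ] H)) (V : unitary (H →L[ℂ] H)) : H →L[ℂ] H :=
  ((1 : ℂ) / 2) • ((1 - U Real.pi) ∘L star (V : H →L[ℂ] H))

/-- `a₋ := (1/2) • ((1 + U(π)) ∘ V)`. -/
def aMinus (U : ℝ → (H →L[ℂ] H)) (V : unitary (H →L[ℂ] H)) : H →L[ℂ] H :=
  ((1 : ℂ) / 2) • ((1 + U Real.pi) ∘L (V : H →L[ℂ] H))

/-- `a₁ := a₊ + a₋`. -/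
def a₁ (U : ℝ → (H →L[ℂ] H)) (V : unitary (H →L[ℂ] H)) : H →L[ℂ] H :=
  aPlus U V + aMinus U V

/-- `a₂ := −i•a₊ + i•a₋`. -/
def a₂ (U : ℝ → (H →L[ℂ] H)) (V : unitary (H →L[ℂ] H)) : H →L[ℂ] H :=
  (-Complex.I) • aPlus U V + Complex.I • aMinus U V

/-- `U₁(θ) := exp(−iθ/2) • (cos(θ/2) • U(θ) + (i·sin(θ/2)) • U(θ+π))`. -/
def U₁ (U : ℝ → (H →L[ℂ] H)) (θ : ℝ) : H →L[ℂ] H :=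
  Complex.exp (-Complex.I * θ / 2) •
    ((Real.cos (θ / 2) : ℂ) • U θ + (Complex.I * Real.sin (θ / 2)) • U (θ + Real.pi))

namespace QCTaux

lemma e_apply_self (i : ℤ) : (e i) i = 1 := lp.single_apply_self 2 i 1

lemma e_apply_ne {i j : ℤ} (h : j ≠ i) : (e i) j = 0 := lp.single_apply_ne 2 i 1 h

lemma smul_coord (a : ℂ) (v : H) (j : ℤ) : (a • v : H) j = a * v j := by
  rw [lp.coeFn_smul]; rfl

lemma hasSum_coords (f : H) : HasSum (fun i : ℤ => f i • e i) f := by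
  have h := lp.hasSum_single (E := fun _ : ℤ => ℂ) (p := 2) (by norm_num) f
  have he : (fun i : ℤ => f i • e i) = fun i : ℤ => lp.single 2 i (f i) := by
    funext i
    rw [e, ← lp.single_smul, smul_eq_mul, mul_one]
  rw [he]; exact h

/-- The coordinate functional on `H`. -/
def coord (j : ℤ) : H →L[ℂ] ℂ :=
  LinearMap.mkContinuous
    { toFun := fun f => f j
      map_add' := fun f g => congrFun (lp.coeFn_add f g) j
      map_smul' := fun c f => congrFun (lp.coeFn_smul c f) j }
    1 (fun f => by simpa using lp.norm_apply_le_norm (p := 2) (by norm_num) f j)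

lemma coord_apply (j : ℤ) (f : H) : coord j f = f j := rfl

lemma diag_apply {A : H →L[ℂ] H} {g : ℤ → ℂ} (hA : ∀ i, A (e i) = g i • e i)
    (f : H) (j : ℤ) : (A f) j = g j * f j := by
  have h1 : HasSum (fun i : ℤ => A (f i • e i)) (A f) := (hasSum_coords f).mapL A
  have h2 : HasSum (fun i : ℤ => coord j (A (f i • e i))) ((A f) j) := h1.mapL (coord j)
  have h3 : (fun i : ℤ => coord j (A (f i • e i))) = fun i => if i = j then g j * f j else 0 := by
    funext i
    rw [map_smul, hA i, coord_apply]
    rcases eq_or_ne i j with rfl | hij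
    · simp [smul_coord, e_apply_self, mul_comm]
    · simp [smul_coord, e_apply_ne (Ne.symm hij), hij]
  rw [h3] at h2
  exact h2.unique (hasSum_ite_eq j _)

lemma exp_I_int_pi (i : ℤ) : Complex.exp (Complex.I * i * Real.pi) = (-1 : ℂ) ^ i := by
  rw [show (Complex.I * i * (Real.pi : ℂ)) = (i : ℂ) * ((Real.pi : ℂ) * Complex.I) by ring,
    Complex.exp_int_mul, Complex.exp_pi_mul_I]

lemma sep {a b : ℤ} (hab : a ≠ b) {t : ℂ}
    (h : ∀ θ : ℝ, Complex.exp (Complex.I * a * θ) * t = Complex.exp (Complex.I * b * θ) * t) :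
    t = 0 := by
  have hdC : ((a : ℂ) - b) ≠ 0 :=
    sub_ne_zero.mpr (by exact_mod_cast hab)
  set θ : ℝ := Real.pi / ((a : ℝ) - b) with hθ
  have h1 := h θ
  have hkey : (Complex.I * a * θ : ℂ) = Complex.I * b * θ + Real.pi * Complex.I := by
    rw [hθ]
    push_cast
    field_simp
    ring
  rw [hkey, Complex.exp_add, Complex.exp_pi_mul_I] at h1
  have he := Complex.exp_ne_zero (Complex.I * b * θ)
  have h2 : (-1 : ℂ) * t = t := mul_left_cancel₀ he (by linear_combination h1)
  linear_combination (-1 / 2 : ℂ) * h2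

/-- the "coarse" eigenvalue index of `U₁`. -/
def mdx (i : ℤ) : ℤ := if i % 2 = 0 then i else i - 1

lemma scal_eq {k : ℤ} {a b : ℂ} (h : a • e k = b • e k) : a = b := by
  have h' := congrArg (fun v : H => v k) h
  simpa [smul_coord, e_apply_self] using h'

end QCTaux

open QCTaux in
/-- **Totality of the qubit subalgebra and its commutant:** a bounded operator
commuting with `a₁, a₂, a₃`, with every `U₁(θ)` and with `V²` is a scalar multiple
of the identity. -/
theorem qubit_and_commutant_total
    (U : ℝ → (H →L[ℂ] H)) (V : unitary (H →L[ℂ] H))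
    (hU : ∀ (θ : ℝ) (ℓ : ℤ), U θ (e ℓ) = Complex.exp (Complex.I * ℓ * θ) • e ℓ)
    (hV : ∀ ℓ : ℤ, (V : H →L[ℂ] H) (e ℓ) = e (ℓ + 1)) :
    ∀ T : H →L[ℂ] H,
      T ∘L a₁ U V = a₁ U V ∘L T →
      T ∘L a₂ U V = a₂ U V ∘L T →
      T ∘L a₃ U = a₃ U ∘L T →
      (∀ θ : ℝ, T ∘L U₁ U θ = U₁ U θ ∘L T) →
      T ∘L ((V : H →L[ℂ] H) ^ 2) = ((V : H →L[ℂ] H) ^ 2) ∘L T →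
      ∃ c : ℂ, T = c • (1 : H →L[ℂ] H) := by
  intro T h1 _h2 h3 hU1 hV2
  -- the action of `U₁` on basis vectors
  have hU1d : ∀ (θ : ℝ) (i : ℤ),
      U₁ U θ (e i) = Complex.exp (Complex.I * (mdx i : ℤ) * θ) • e i := by
    intro θ i
    have hpi : Complex.exp (Complex.I * i * ((θ + Real.pi : ℝ) : ℂ)) =
        Complex.exp (Complex.I * i * θ) * (-1 : ℂ) ^ i := by
      rw [show (Complex.I * i * ((θ + Real.pi : ℝ) : ℂ))
            = Complex.I * i * θ + Complex.I * i * Real.pi by push_cast; ring,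
        Complex.exp_add, exp_I_int_pi]
    rw [U₁]
    simp only [ContinuousLinearMap.smul_apply, ContinuousLinearMap.add_apply, hU, hpi,
      smul_smul]
    rw [← add_smul, smul_smul]
    congr 1
    by_cases hpar : i % 2 = 0
    · have hev : (-1 : ℂ) ^ i = 1 := Even.neg_one_zpow (by rw [Int.even_iff]; exact hpar)
      have hcs : (Real.cos (θ / 2) : ℂ) + Complex.I * (Real.sin (θ / 2) : ℂ)
          = Complex.exp ((θ : ℂ) / 2 * Complex.I) := by
        rw [show ((θ : ℂ) / 2) = ((θ / 2 : ℝ) : ℂ) by push_cast; ring, Complex.exp_mul_I,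
          ← Complex.ofReal_cos, ← Complex.ofReal_sin]
        ring
      rw [mdx, if_pos hpar]
      rw [hev, mul_one]
      have : Complex.exp (-Complex.I * θ / 2) *
          ((Real.cos (θ / 2) : ℂ) * Complex.exp (Complex.I * i * θ) +
            Complex.I * (Real.sin (θ / 2) : ℂ) * Complex.exp (Complex.I * i * θ))
          = Complex.exp (-Complex.I * θ / 2) * Complex.exp ((θ : ℂ) / 2 * Complex.I) *
              Complex.exp (Complex.I * i * θ) := by
        rw [← hcs]; ring
      rw [this, ← Complex.exp_add, ← Complex.exp_add]
      congr 1
      ring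
    · have hod : (-1 : ℂ) ^ i = -1 := Odd.neg_one_zpow (by rw [Int.odd_iff]; omega)
      have hcs : (Real.cos (θ / 2) : ℂ) - Complex.I * (Real.sin (θ / 2) : ℂ)
          = Complex.exp (-((θ : ℂ) / 2) * Complex.I) := by
        rw [show (-((θ : ℂ) / 2)) = ((-(θ / 2) : ℝ) : ℂ) by push_cast; ring, Complex.exp_mul_I,
          Complex.ofReal_neg, Complex.cos_neg, Complex.sin_neg,
          ← Complex.ofReal_cos, ← Complex.ofReal_sin]
        ring
      rw [mdx, if_neg hpar]
      rw [hod]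
      have : Complex.exp (-Complex.I * θ / 2) *
          ((Real.cos (θ / 2) : ℂ) * Complex.exp (Complex.I * i * θ) +
            Complex.I * (Real.sin (θ / 2) : ℂ) * (Complex.exp (Complex.I * i * θ) * (-1)))
          = Complex.exp (-Complex.I * θ / 2) * Complex.exp (-((θ : ℂ) / 2) * Complex.I) *
              Complex.exp (Complex.I * i * θ) := by
        rw [← hcs]; ring
      rw [this, ← Complex.exp_add, ← Complex.exp_add]
      congr 1
      push_cast
      ring
  -- the entries of `T`
  set c : ℤ → ℂ := fun ℓ => T (e ℓ) ℓ with hc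
  -- `T` is diagonal
  have hTdiag : ∀ ℓ : ℤ, T (e ℓ) = c ℓ • e ℓ := by
    intro ℓ
    apply lp.ext
    funext j
    rcases eq_or_ne j ℓ with rfl | hj
    · simp [smul_coord, e_apply_self, hc]
    · rw [show ((c ℓ • e ℓ : H) j) = 0 by simp [smul_coord, e_apply_ne hj]]
      rcases eq_or_ne (ℓ % 2) (j % 2) with hpar | hpar
      · -- same parity: use `U₁`
        refine sep (a := mdx ℓ) (b := mdx j) ?_ fun θ => ?_
        · simp only [mdx]
          split_ifs <;> omega
        · have h := congrArg (fun S : H →L[ℂ] H => (S (e ℓ)) j) (hU1 θ)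
          simp only [ContinuousLinearMap.comp_apply] at h
          rw [hU1d, map_smul, smul_coord] at h
          rw [diag_apply (g := fun i => Complex.exp (Complex.I * (mdx i : ℤ) * θ))
            (hU1d θ) (T (e ℓ)) j] at h
          exact h
      · -- different parity: use `a₃`
        have h := congrArg (fun S : H →L[ℂ] H => (S (e ℓ)) j) h3
        simp only [ContinuousLinearMap.comp_apply] at h
        rw [a₃, hU, map_smul, smul_coord] at h
        rw [diag_apply (g := fun i => Complex.exp (Complex.I * (i : ℤ) * Real.pi))
          (fun i => hU Real.pi i) (T (e ℓ)) j] at h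
        rw [exp_I_int_pi, exp_I_int_pi] at h
        rcases eq_or_ne (ℓ % 2) 0 with h0 | h0
        · rw [Even.neg_one_zpow (by rw [Int.even_iff]; exact h0),
            Odd.neg_one_zpow (n := j) (by rw [Int.odd_iff]; omega)] at h
          linear_combination (1 / 2 : ℂ) * h
        · rw [Odd.neg_one_zpow (n := ℓ) (by rw [Int.odd_iff]; omega),
            Even.neg_one_zpow (n := j) (by rw [Int.even_iff]; omega)] at h
          linear_combination (-1 / 2 : ℂ) * h
  -- action of `star V` on basis vectors
  have hVs : ∀ i : ℤ, (star (V : H →L[ℂ] H)) (e i) = e (i - 1) := by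
    intro i
    have h0 : star (V : H →L[ℂ] H) * (V : H →L[ℂ] H) = 1 := V.prop.1
    have h' : star (V : H →L[ℂ] H) ((V : H →L[ℂ] H) (e (i - 1))) = e (i - 1) := by
      rw [← ContinuousLinearMap.mul_apply, h0, ContinuousLinearMap.one_apply]
    rwa [hV, show i - 1 + 1 = i by ring] at h'
  -- action of `a₁` on basis vectors
  have ha1 : ∀ ℓ : ℤ, a₁ U V (e ℓ) = if ℓ % 2 = 0 then e (ℓ - 1) else e (ℓ + 1) := by
    intro ℓ
    rw [a₁, aPlus, aMinus]
    simp only [ContinuousLinearMap.add_apply, ContinuousLinearMap.smul_apply,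
      ContinuousLinearMap.comp_apply, hVs, hV, ContinuousLinearMap.sub_apply,
      ContinuousLinearMap.one_apply, hU, exp_I_int_pi]
    by_cases h0 : ℓ % 2 = 0
    · rw [if_pos h0,
        Odd.neg_one_zpow (n := ℓ - 1) (by rw [Int.odd_iff]; omega),
        Odd.neg_one_zpow (n := ℓ + 1) (by rw [Int.odd_iff]; omega)]
      module
    · rw [if_neg h0,
        Even.neg_one_zpow (n := ℓ - 1) (by rw [Int.even_iff]; omega),
        Even.neg_one_zpow (n := ℓ + 1) (by rw [Int.even_iff]; omega)]
      module
  -- action of `V ^ 2` on basis vectors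
  have hV2e : ∀ ℓ : ℤ, ((V : H →L[ℂ] H) ^ 2) (e ℓ) = e (ℓ + 2) := by
    intro ℓ
    rw [sq, ContinuousLinearMap.mul_apply, hV, hV, show ℓ + 1 + 1 = ℓ + 2 by ring]
  -- shift relation for the diagonal entries
  have hstep2 : ∀ ℓ : ℤ, c (ℓ + 2) = c ℓ := by
    intro ℓ
    have h := congrArg (fun S : H →L[ℂ] H => S (e ℓ)) hV2
    simp only [ContinuousLinearMap.comp_apply] at h
    rw [hV2e, hTdiag, hTdiag, map_smul, hV2e] at h
    exact scal_eq h
  -- pairing relation for the diagonal entries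
  have hpair : ∀ ℓ : ℤ, ℓ % 2 = 0 → c (ℓ - 1) = c ℓ := by
    intro ℓ h0
    have h := congrArg (fun S : H →L[ℂ] H => S (e ℓ)) h1
    simp only [ContinuousLinearMap.comp_apply] at h
    rw [ha1, if_pos h0, hTdiag, hTdiag, map_smul, ha1, if_pos h0] at h
    exact scal_eq h
  have hpair' : ∀ ℓ : ℤ, ℓ % 2 ≠ 0 → c (ℓ + 1) = c ℓ := by
    intro ℓ h0
    have h := congrArg (fun S : H →L[ℂ] H => S (e ℓ)) h1
    simp only [ContinuousLinearMap.comp_apply] at h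
    rw [ha1, if_neg h0, hTdiag, hTdiag, map_smul, ha1, if_neg h0] at h
    exact scal_eq h
  -- consecutive entries agree
  have hsucc : ∀ ℓ : ℤ, c (ℓ + 1) = c ℓ := by
    intro ℓ
    by_cases h0 : ℓ % 2 = 0
    · have h2 := hpair (ℓ + 2) (by omega)
      rw [show ℓ + 2 - 1 = ℓ + 1 by ring] at h2
      rw [h2, hstep2]
    · exact hpair' ℓ h0
  have hconst : ∀ ℓ : ℤ, c ℓ = c 0 := by
    intro ℓ
    induction ℓ using Int.induction_on with
    | zero => rfl
    | succ n ih => rw [hsucc]; exact ih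
    | pred n ih =>
        have h := hsucc (-(n : ℤ) - 1)
        rw [show (-(n : ℤ) - 1 + 1) = -(n : ℤ) by ring] at h
        rw [← h]
        exact ih
  refine ⟨c 0, ?_⟩
  ext x
  have hs := hasSum_coords x
  have hA : HasSum (fun i : ℤ => x i • (c 0 • e i)) (T x) := by
    have h := hs.mapL T
    simpa only [map_smul, hTdiag, hconst] using h
  have hB : HasSum (fun i : ℤ => x i • (c 0 • e i)) (c 0 • x) := by
    have h := hs.const_smul (c 0)
    simpa only [smul_comm (c 0)] using h
  rw [hA.unique hB]
  simp
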